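/- arXiv:1710.01039 — 4 statements merged into one kernel-verified Lean document; each statement's English description precedes it below -/
import Mathlib

section
/- Let ι be a finite type and for each i ∈ ι let m i and k i be nonempty finite types with decidable equality; let τ : ∀ i, Matrix (k i) (k i) ℂ be positive definite matrices of trace 1. Set d := card (Σ i, (m i × k i)) and σTr := Matrix.blockDiagonal' (fun i => ((card (k i) : ℝ)/d) • ((1 : Matrix (m i) (m i) ℂ) ⊗ₖ τ i)). For a matrix X on Σ i, (m i × k i) let X_i denote its i-th diagonal block, X_i((a,b),(a',b')) := X(⟨i,(a,b)⟩, ⟨i,(a',b')⟩). Define E_N(X) := Matrix.blockDiagonal' (fun i => T_i(X_i) ⊗ₖ 1) where T_i(Z)(a,a') := Σ_{b,b'} Z((a,b),(a',b')) · (τ i)(b',b), and E_{N*}(X) := Matrix.blockDiagonal' (fun i => S_i(X_i) ⊗ₖ τ i) where S_i(Z)(a,a') := Σ_b Z((a,b),(a',b)). Then for every matrix X on Σ i, (m i × k i): σTr^{1/2} * E_N(X) * σTr^{1/2} = E_{N*}(σTr^{1/2} * X * σTr^{1/2}), where σTr^{1/2} is the positive square root of σTr. -/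
open Matrix Kronecker
open scoped ComplexOrder

/-- matrix square root via the continuous functional calculus -/
noncomputable def msqrt {n : Type*} [Fintype n] [DecidableEq n] (A : Matrix n n ℂ) :
    Matrix n n ℂ := cfc Real.sqrt A

section Blocks

variable {ι : Type*} [Fintype ι] [DecidableEq ι]
  {m k : ι → Type*} [∀ i, Fintype (m i)] [∀ i, Fintype (k i)]
  [∀ i, DecidableEq (m i)] [∀ i, DecidableEq (k i)]

/-- the `i`-th diagonal block of a matrix on `Σ i, (m i × k i)` -/
def blockOf (X : Matrix (Σ i, (m i × k i)) (Σ i, (m i × k i)) ℂ) (i : ι) :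
    Matrix (m i × k i) (m i × k i) ℂ :=
  Matrix.of fun p q => X ⟨i, p⟩ ⟨i, q⟩

/-- the conditional expectation `E_N` onto the decoherence-free algebra -/
noncomputable def condExp (τ : ∀ i, Matrix (k i) (k i) ℂ)
    (X : Matrix (Σ i, (m i × k i)) (Σ i, (m i × k i)) ℂ) :
    Matrix (Σ i, (m i × k i)) (Σ i, (m i × k i)) ℂ :=
  Matrix.blockDiagonal' fun i =>
    (Matrix.of fun a a' => ∑ b, ∑ b', blockOf X i (a, b) (a', b') * τ i b' b) ⊗ₖ
      (1 : Matrix (k i) (k i) ℂ)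

/-- the predual conditional expectation `E_{N*}` -/
noncomputable def condExpPredual (τ : ∀ i, Matrix (k i) (k i) ℂ)
    (X : Matrix (Σ i, (m i × k i)) (Σ i, (m i × k i)) ℂ) :
    Matrix (Σ i, (m i × k i)) (Σ i, (m i × k i)) ℂ :=
  Matrix.blockDiagonal' fun i =>
    (Matrix.of fun a a' => ∑ b, blockOf X i (a, b) (a', b)) ⊗ₖ τ i

/-- the reference state `σ_Tr` -/
noncomputable def sigmaTr (τ : ∀ i, Matrix (k i) (k i) ℂ) :
    Matrix (Σ i, (m i × k i)) (Σ i, (m i × k i)) ℂ :=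
  Matrix.blockDiagonal' fun i =>
    ((Fintype.card (k i) : ℝ) / (Fintype.card (Σ i, (m i × k i)) : ℝ)) •
      ((1 : Matrix (m i) (m i) ℂ) ⊗ₖ τ i)

end Blocks

section Aux

section SqrtCompat
open scoped MatrixOrder

noncomputable def Matrix.PosSemidef.sqrt {n : Type*} [Fintype n] [DecidableEq n]
    {A : Matrix n n ℂ} (hA : A.PosSemidef) : Matrix n n ℂ :=
  hA.1.cfc Real.sqrt

lemma Matrix.PosSemidef.sqrt_eq_cfcSqrt {n : Type*} [Fintype n] [DecidableEq n]
    {A : Matrix n n ℂ} (hA : A.PosSemidef) : hA.sqrt = CFC.sqrt A := by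
  rw [CFC.sqrt_eq_real_sqrt A hA.nonneg, cfcₙ_eq_cfc, hA.1.cfc_eq]
  rfl

lemma Matrix.PosSemidef.posSemidef_sqrt {n : Type*} [Fintype n] [DecidableEq n]
    {A : Matrix n n ℂ} (hA : A.PosSemidef) : hA.sqrt.PosSemidef := by
  rw [hA.sqrt_eq_cfcSqrt]
  exact (CFC.sqrt_nonneg A).posSemidef

lemma Matrix.PosSemidef.sqrt_mul_self {n : Type*} [Fintype n] [DecidableEq n]
    {A : Matrix n n ℂ} (hA : A.PosSemidef) : hA.sqrt * hA.sqrt = A := by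
  rw [hA.sqrt_eq_cfcSqrt]
  exact CFC.sqrt_mul_sqrt_self A hA.nonneg

lemma Matrix.PosSemidef.eq_sqrt_of_sq_eq {n : Type*} [Fintype n] [DecidableEq n]
    {A B : Matrix n n ℂ} (hA : A.PosSemidef) (hB : B.PosSemidef) (h : A ^ 2 = B) :
    A = hB.sqrt := by
  rw [hB.sqrt_eq_cfcSqrt]
  exact (CFC.sqrt_unique (by rw [← h, pow_two]) hA.nonneg).symm

end SqrtCompat

lemma msqrt_eq {n : Type*} [Fintype n] [DecidableEq n] {A : Matrix n n ℂ}
    (hA : A.PosSemidef) : msqrt A = hA.sqrt := by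
  rw [msqrt, hA.1.cfc_eq]
  rfl

lemma kron_conjT {l n : Type*} [Fintype l] [Fintype n]
    (A : Matrix l l ℂ) (B : Matrix n n ℂ) : (A ⊗ₖ B)ᴴ = Aᴴ ⊗ₖ Bᴴ := by
  ext ⟨a,b⟩ ⟨c,d⟩
  simp [conjTranspose_apply, Matrix.kroneckerMap_apply]

lemma real_smul_matrix_eq {n p : Type*} (x : ℝ) (M : Matrix n p ℂ) :
    x • M = (x : ℂ) • M := by
  ext i j
  simp [Matrix.smul_apply, Complex.real_smul]

lemma sandwich_sum {M K : Type*} [Fintype M] [Fintype K] [DecidableEq M] [DecidableEq K]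
    (r τ : Matrix K K ℂ) (hrr : r * r = τ)
    (Z : Matrix (M × K) (M × K) ℂ) (a a' : M) :
    ∑ b, (((1 : Matrix M M ℂ) ⊗ₖ r) * Z * ((1 : Matrix M M ℂ) ⊗ₖ r)) (a, b) (a', b)
      = ∑ b1, ∑ b2, Z (a, b1) (a', b2) * τ b2 b1 := by
  have h1 : ∀ (W : Matrix (M × K) (M × K) ℂ) (b : K) (q : M × K),
      (((1 : Matrix M M ℂ) ⊗ₖ r) * W) (a, b) q = ∑ b1, r b b1 * W (a, b1) q := by
    intro W b q
    simp [mul_apply, Fintype.sum_prod_type, one_apply, ite_mul]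
  have h2 : ∀ (W : Matrix (M × K) (M × K) ℂ) (p : M × K) (b' : K),
      (W * ((1 : Matrix M M ℂ) ⊗ₖ r)) p (a', b') = ∑ b2, W p (a', b2) * r b2 b' := by
    intro W p b'
    simp [mul_apply, Fintype.sum_prod_type, one_apply, mul_ite]
  simp only [mul_assoc, h1, h2, ← hrr, mul_apply, Finset.mul_sum, Finset.sum_mul]
  have swap : ∀ f : K → K → K → ℂ,
      (∑ z, ∑ x, ∑ y, f z x y) = ∑ y, ∑ z, ∑ x, f z x y := fun f =>
    (Finset.sum_congr rfl fun z _ => Finset.sum_comm).trans Finset.sum_comm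
  rw [swap]
  exact Finset.sum_congr rfl fun b1 _ => Finset.sum_comm.trans <|
    Finset.sum_congr rfl fun b2 _ => Finset.sum_congr rfl fun b _ => by ring

section BlocksAux
variable {ι : Type*} [Fintype ι] [DecidableEq ι]
  {m k : ι → Type*} [∀ i, Fintype (m i)] [∀ i, Fintype (k i)]
  [∀ i, DecidableEq (m i)] [∀ i, DecidableEq (k i)]

set_option linter.unusedSectionVars false

lemma blockOf_blockDiagonal'_mul (D : ∀ i, Matrix (m i × k i) (m i × k i) ℂ)
    (X : Matrix (Σ i, (m i × k i)) (Σ i, (m i × k i)) ℂ) (i : ι) :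
    blockOf (Matrix.blockDiagonal' D * X) i = D i * blockOf X i := by
  ext p q
  simp only [blockOf, of_apply, mul_apply, ← Finset.univ_sigma_univ, Finset.sum_sigma]
  rw [Fintype.sum_eq_single i]
  · simp
  · intro j hj
    apply Finset.sum_eq_zero
    intro u _
    rw [blockDiagonal'_apply_ne _ _ _ (Ne.symm hj), zero_mul]

lemma blockOf_mul_blockDiagonal' (D : ∀ i, Matrix (m i × k i) (m i × k i) ℂ)
    (X : Matrix (Σ i, (m i × k i)) (Σ i, (m i × k i)) ℂ) (i : ι) :
    blockOf (X * Matrix.blockDiagonal' D) i = blockOf X i * D i := by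
  ext p q
  simp only [blockOf, of_apply, mul_apply, ← Finset.univ_sigma_univ, Finset.sum_sigma]
  rw [Fintype.sum_eq_single i]
  · simp
  · intro j hj
    apply Finset.sum_eq_zero
    intro u _
    rw [blockDiagonal'_apply_ne _ _ _ hj, mul_zero]

end BlocksAux
end Aux

/-- **Lemma 2.2, part 1.**
`σTr^{1/2} * E_N(X) * σTr^{1/2} = E_{N*}(σTr^{1/2} * X * σTr^{1/2})`. -/
theorem sqrt_sigmaTr_condExp_eq_condExpPredual
    {ι : Type*} [Fintype ι] [DecidableEq ι]
    {m k : ι → Type*} [∀ i, Fintype (m i)] [∀ i, Fintype (k i)]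
    [∀ i, Nonempty (m i)] [∀ i, Nonempty (k i)]
    [∀ i, DecidableEq (m i)] [∀ i, DecidableEq (k i)]
    (τ : ∀ i, Matrix (k i) (k i) ℂ)
    (hτ : ∀ i, (τ i).PosDef) (hτtr : ∀ i, Matrix.trace (τ i) = 1)
    (X : Matrix (Σ i, (m i × k i)) (Σ i, (m i × k i)) ℂ) :
    msqrt (sigmaTr τ) * condExp τ X * msqrt (sigmaTr τ) =
      condExpPredual τ (msqrt (sigmaTr τ) * X * msqrt (sigmaTr τ)) := by
  classical
  -- notation
  set c : ι → ℝ := fun i =>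
    (Fintype.card (k i) : ℝ) / (Fintype.card (Σ i, (m i × k i)) : ℝ) with hc_def
  have hc : ∀ i, 0 ≤ c i := fun i => div_nonneg (Nat.cast_nonneg _) (Nat.cast_nonneg _)
  set s : ι → ℝ := fun i => Real.sqrt (c i) with hs_def
  have hs : ∀ i, 0 ≤ s i := fun i => Real.sqrt_nonneg _
  have hss : ∀ i, s i * s i = c i := fun i => Real.mul_self_sqrt (hc i)
  -- square roots of the τ i
  set r : ∀ i, Matrix (k i) (k i) ℂ := fun i => ((hτ i).posSemidef).sqrt with hr_def
  have hrpsd : ∀ i, (r i).PosSemidef := fun i => ((hτ i).posSemidef).posSemidef_sqrt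
  have hrr : ∀ i, r i * r i = τ i := fun i => ((hτ i).posSemidef).sqrt_mul_self
  set q : ∀ i, Matrix (k i) (k i) ℂ := fun i => (hrpsd i).sqrt with hq_def
  have hqher : ∀ i, (q i).IsHermitian := fun i => ((hrpsd i).posSemidef_sqrt).1
  have hqq : ∀ i, q i * q i = r i := fun i => (hrpsd i).sqrt_mul_self
  -- the candidate square root of sigmaTr
  set Dblk : ∀ i, Matrix (m i × k i) (m i × k i) ℂ := fun i =>
    (s i : ℂ) • ((1 : Matrix (m i) (m i) ℂ) ⊗ₖ r i) with hDblk_def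
  set B : Matrix (Σ i, (m i × k i)) (Σ i, (m i × k i)) ℂ :=
    Matrix.blockDiagonal' Dblk with hB_def
  -- C with C * C = B, C hermitian
  set Cblk : ∀ i, Matrix (m i × k i) (m i × k i) ℂ := fun i =>
    (Real.sqrt (s i) : ℂ) • ((1 : Matrix (m i) (m i) ℂ) ⊗ₖ q i) with hCblk_def
  set C : Matrix (Σ i, (m i × k i)) (Σ i, (m i × k i)) ℂ :=
    Matrix.blockDiagonal' Cblk with hC_def
  have hCher : Cᴴ = C := by
    rw [hC_def, Matrix.blockDiagonal'_conjTranspose]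
    refine congrArg Matrix.blockDiagonal' (funext fun i => ?_)
    rw [hCblk_def]
    simp only [conjTranspose_smul, kron_conjT, conjTranspose_one, (hqher i).eq]
    congr 1
    simp [Complex.ext_iff]
  have hCC : C * C = B := by
    rw [hC_def, hB_def, ← Matrix.blockDiagonal'_mul]
    refine congrArg Matrix.blockDiagonal' (funext fun i => ?_)
    show Cblk i * Cblk i = Dblk i
    rw [hCblk_def, hDblk_def]
    rw [smul_mul_assoc, mul_smul_comm, smul_smul, ← Matrix.mul_kronecker_mul,
      one_mul, hqq]
    congr 1
    rw [← Complex.ofReal_mul, Real.mul_self_sqrt (hs i)]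
  have hBpsd : B.PosSemidef := by
    rw [← hCC]
    nth_rewrite 1 [← hCher]
    exact Matrix.posSemidef_conjTranspose_mul_self C
  have hBB : B * B = sigmaTr τ := by
    rw [hB_def, sigmaTr, ← Matrix.blockDiagonal'_mul]
    refine congrArg Matrix.blockDiagonal' (funext fun i => ?_)
    show Dblk i * Dblk i = _
    rw [hDblk_def]
    rw [smul_mul_assoc, mul_smul_comm, smul_smul, ← Matrix.mul_kronecker_mul,
      one_mul, hrr, real_smul_matrix_eq]
    congr 1
    rw [← Complex.ofReal_mul, hss]
  have hσ : (sigmaTr τ : Matrix (Σ i, (m i × k i)) (Σ i, (m i × k i)) ℂ).PosSemidef := by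
    rw [← hBB]
    nth_rewrite 1 [← hBpsd.1]
    exact Matrix.posSemidef_conjTranspose_mul_self B
  have hmsqrt : msqrt (sigmaTr τ) = B := by
    rw [msqrt_eq hσ]
    exact (hBpsd.eq_sqrt_of_sq_eq hσ (by rw [pow_two, hBB])).symm
  rw [hmsqrt]
  -- now the block computation
  rw [condExp, condExpPredual, hB_def, ← Matrix.blockDiagonal'_mul, ← Matrix.blockDiagonal'_mul]
  have hblockY : ∀ i, blockOf (Matrix.blockDiagonal' Dblk * X * Matrix.blockDiagonal' Dblk) i
      = Dblk i * blockOf X i * Dblk i := by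
    intro i
    rw [blockOf_mul_blockDiagonal', blockOf_blockDiagonal'_mul]
  refine congrArg Matrix.blockDiagonal' (funext fun i => ?_)
  show Dblk i * _ * Dblk i = _
  simp only [hblockY]
  -- per-block identity
  set Z := blockOf X i with hZ
  set T : Matrix (m i) (m i) ℂ :=
    Matrix.of fun a a' => ∑ b, ∑ b', Z (a, b) (a', b') * τ i b' b with hT
  have hDZD : Dblk i * Z * Dblk i
      = ((s i : ℂ) * (s i : ℂ)) •
        ((((1 : Matrix (m i) (m i) ℂ) ⊗ₖ r i) * Z * ((1 : Matrix (m i) (m i) ℂ) ⊗ₖ r i))) := by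
    rw [hDblk_def]
    rw [smul_mul_assoc, smul_mul_assoc, mul_smul_comm, smul_smul]
  have hRHS : (Matrix.of fun a a' => ∑ b, (Dblk i * Z * Dblk i) (a, b) (a', b))
      = ((s i : ℂ) * (s i : ℂ)) • T := by
    ext a a'
    simp only [hDZD, Matrix.of_apply, Matrix.smul_apply, smul_eq_mul, ← Finset.mul_sum]
    rw [sandwich_sum (r i) (τ i) (hrr i) Z a a']
    rw [hT]
    simp
  rw [hRHS]
  -- LHS block
  rw [hDblk_def]
  rw [smul_mul_assoc, smul_mul_assoc, mul_smul_comm, smul_smul]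
  rw [← Matrix.mul_kronecker_mul, ← Matrix.mul_kronecker_mul]
  rw [one_mul, mul_one, mul_one, hrr, smul_kronecker]
end

section
/- In the setting of the previous block-diagonal construction (finite ι, nonempty finite m i, k i, positive definite trace-one τ i, σTr := Matrix.blockDiagonal' (fun i => ((card (k i) : ℝ)/d) • (1 ⊗ₖ τ i)) with d := card (Σ i, (m i × k i)), and E_N(X) := Matrix.blockDiagonal' (fun i => T_i(X_i) ⊗ₖ 1) where T_i(Z)(a,a') := Σ_{b,b'} Z((a,b),(a',b')) · (τ i)(b',b) and X_i is the i-th diagonal block of X), the map E_N is idempotent, E_N(E_N(X)) = E_N(X), and for all matrices X, Y on Σ i, (m i × k i): ⟨E_N(X), Y⟩_{σTr} = ⟨E_N(X), E_N(Y)⟩_{σTr} = ⟨X, E_N(Y)⟩_{σTr}. Hence E_N is the orthogonal projection onto its range with respect to the KMS inner product of σTr. -/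
open Matrix Kronecker
open scoped ComplexOrder

/-- the KMS inner product associated with a (positive definite) matrix `σ`:
`⟨X, Y⟩_σ = Tr[σ^{1/2} X* σ^{1/2} Y]`. -/
noncomputable def kmsInner {n : Type*} [Fintype n] [DecidableEq n]
    (σ X Y : Matrix n n ℂ) : ℂ :=
  Matrix.trace (msqrt σ * Xᴴ * msqrt σ * Y)

/-! ### Auxiliary lemmas -/
set_option linter.unusedSectionVars false

lemma commute_cfc' {n : Type*} [Fintype n] [DecidableEq n] (f : ℝ → ℝ) {A B : Matrix n n ℂ}
    (hA : IsSelfAdjoint A) (h : Commute A B) : Commute (cfc f A) B := by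
  have hfin : (spectrum ℝ A).Finite := A.finite_real_spectrum
  set q : Polynomial ℝ := Lagrange.interpolate hfin.toFinset id f with hq
  have h1 : cfc f A = cfc q.eval A := by
    refine cfc_congr fun x hx => ?_
    rw [hq, show x = id x from rfl,
      Lagrange.eval_interpolate_at_node f (Set.injOn_id _) (hfin.mem_toFinset.mpr hx)]
    rfl
  rw [h1, cfc_polynomial q A]
  induction q using Polynomial.induction_on' with
  | add p r hp hr => simpa [map_add] using hp.add_left hr
  | monomial i r =>
      rw [Polynomial.aeval_monomial]
      exact (Algebra.commute_algebraMap_left r B).mul_left (h.pow_left i)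

section BlocksAux

variable {ι : Type*} [Fintype ι] [DecidableEq ι]
  {m k : ι → Type*} [∀ i, Fintype (m i)] [∀ i, Fintype (k i)]
  [∀ i, DecidableEq (m i)] [∀ i, DecidableEq (k i)]

/-- the compression map appearing in `condExp` -/
noncomputable def TT (τ : ∀ i, Matrix (k i) (k i) ℂ)
    (X : Matrix (Σ i, (m i × k i)) (Σ i, (m i × k i)) ℂ) (i : ι) : Matrix (m i) (m i) ℂ :=
  Matrix.of fun a a' => ∑ b, ∑ b', blockOf X i (a, b) (a', b') * τ i b' b

lemma condExp_eq (τ : ∀ i, Matrix (k i) (k i) ℂ)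
    (X : Matrix (Σ i, (m i × k i)) (Σ i, (m i × k i)) ℂ) :
    condExp τ X = Matrix.blockDiagonal' fun i => TT τ X i ⊗ₖ (1 : Matrix (k i) (k i) ℂ) := rfl

lemma blockOf_blockDiagonal' (M : ∀ i, Matrix (m i × k i) (m i × k i) ℂ) (i : ι) :
    blockOf (Matrix.blockDiagonal' M) i = M i := by
  ext p q
  simp [blockOf, Matrix.blockDiagonal'_apply_eq]

lemma trace_blockDiagonal'_mul (M : ∀ i, Matrix (m i × k i) (m i × k i) ℂ)
    (Y : Matrix (Σ i, (m i × k i)) (Σ i, (m i × k i)) ℂ) :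
    Matrix.trace (Matrix.blockDiagonal' M * Y) =
      ∑ i, Matrix.trace (M i * blockOf Y i) := by
  simp only [Matrix.trace, Matrix.diag, Matrix.mul_apply]
  rw [← Finset.univ_sigma_univ, Finset.sum_sigma]
  refine Finset.sum_congr rfl fun i _ => ?_
  refine Finset.sum_congr rfl fun p _ => ?_
  rw [Finset.sum_sigma]
  rw [Fintype.sum_eq_single i]
  · exact Finset.sum_congr rfl fun q _ => by
      rw [Matrix.blockDiagonal'_apply_eq]; rfl
  · intro j hj
    exact Finset.sum_eq_zero fun q _ => by
      rw [Matrix.blockDiagonal'_apply_ne _ _ _ (Ne.symm hj), zero_mul]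

lemma kron_conjTranspose {i : ι} (A : Matrix (m i) (m i) ℂ) (B : Matrix (k i) (k i) ℂ) :
    (A ⊗ₖ B)ᴴ = Aᴴ ⊗ₖ Bᴴ := by
  ext ⟨a, b⟩ ⟨a', b'⟩
  simp [Matrix.conjTranspose_apply, Matrix.kroneckerMap_apply]

lemma smul_kron {i : ι} (c : ℝ) (A : Matrix (m i) (m i) ℂ) (B : Matrix (k i) (k i) ℂ) :
    c • (A ⊗ₖ B) = (c • A) ⊗ₖ B := by
  ext ⟨a, b⟩ ⟨a', b'⟩
  simp [Matrix.kroneckerMap_apply, Complex.real_smul]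
  ring

lemma trace_kron_tau_mul {i : ι} (τ : Matrix (k i) (k i) ℂ) (P : Matrix (m i) (m i) ℂ)
    (Z : Matrix (m i × k i) (m i × k i) ℂ) :
    Matrix.trace ((P ⊗ₖ τ) * Z) =
      Matrix.trace (P * Matrix.of fun a a' => ∑ b, ∑ b', Z (a, b) (a', b') * τ b' b) := by
  simp only [Matrix.trace, Matrix.diag, Matrix.mul_apply, Matrix.of_apply,
    Matrix.kroneckerMap_apply, Fintype.sum_prod_type, Finset.mul_sum, Finset.sum_mul]
  refine Finset.sum_congr rfl fun a _ => ?_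
  rw [Finset.sum_comm]
  refine Finset.sum_congr rfl fun a' _ => ?_
  rw [Finset.sum_comm]
  exact Finset.sum_congr rfl fun u _ => Finset.sum_congr rfl fun v _ => by ring

variable (τ : ∀ i, Matrix (k i) (k i) ℂ)

lemma sigmaTr_isHermitian (hτ : ∀ i, (τ i).PosDef) : (sigmaTr (m := m) τ).IsHermitian := by
  unfold Matrix.IsHermitian sigmaTr
  rw [Matrix.blockDiagonal'_conjTranspose]
  refine congrArg _ (funext fun i => ?_)
  rw [Matrix.conjTranspose_smul, star_trivial, kron_conjTranspose, Matrix.conjTranspose_one,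
    (hτ i).1]

lemma sigmaTr_posSemidef (hτ : ∀ i, (τ i).PosDef) : (sigmaTr (m := m) τ).PosSemidef := by
  refine Matrix.PosSemidef.of_dotProduct_mulVec_nonneg (sigmaTr_isHermitian τ hτ) fun x => ?_
  have hbd : ∀ (M : ∀ i, Matrix (m i × k i) (m i × k i) ℂ),
      star x ⬝ᵥ (Matrix.blockDiagonal' M *ᵥ x) =
        ∑ i, star (fun p => x ⟨i, p⟩) ⬝ᵥ (M i *ᵥ fun p => x ⟨i, p⟩) := by
    intro M
    simp only [dotProduct, Matrix.mulVec, Pi.star_apply]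
    rw [← Finset.univ_sigma_univ, Finset.sum_sigma]
    refine Finset.sum_congr rfl fun i _ => Finset.sum_congr rfl fun p _ => ?_
    congr 1
    rw [Finset.sum_sigma]
    rw [Fintype.sum_eq_single i]
    · exact Finset.sum_congr rfl fun q _ => by rw [Matrix.blockDiagonal'_apply_eq]
    · intro j hj
      exact Finset.sum_eq_zero fun q _ => by
        rw [Matrix.blockDiagonal'_apply_ne _ _ _ (Ne.symm hj), zero_mul]
  rw [sigmaTr, hbd]
  refine Finset.sum_nonneg fun i _ => ?_
  set y : (m i × k i) → ℂ := fun p => x ⟨i, p⟩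
  have key : star y ⬝ᵥ (((1 : Matrix (m i) (m i) ℂ) ⊗ₖ τ i) *ᵥ y) =
      ∑ a, star (fun b => y (a, b)) ⬝ᵥ (τ i *ᵥ fun b => y (a, b)) := by
    simp only [dotProduct, Matrix.mulVec, Pi.star_apply, Matrix.kroneckerMap_apply]
    rw [← Finset.univ_product_univ, Finset.sum_product]
    refine Finset.sum_congr rfl fun a _ => Finset.sum_congr rfl fun b _ => ?_
    congr 1
    rw [Finset.sum_product]
    rw [Fintype.sum_eq_single a]
    · simp [Matrix.one_apply]
    · intro a' ha'
      refine Finset.sum_eq_zero fun b' _ => by simp [Matrix.one_apply, Ne.symm ha']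
  rw [Matrix.smul_mulVec, dotProduct_smul, key]
  have hsum : 0 ≤ ∑ a, star (fun b => y (a, b)) ⬝ᵥ (τ i *ᵥ fun b => y (a, b)) :=
    Finset.sum_nonneg fun a _ => (hτ i).posSemidef.dotProduct_mulVec_nonneg _
  have hc : (0:ℝ) ≤ (Fintype.card (k i) : ℝ) / (Fintype.card (Σ i, (m i × k i)) : ℝ) := by
    positivity
  exact smul_nonneg hc hsum

lemma sigmaTr_spectrum_nonneg (hτ : ∀ i, (τ i).PosDef) :
    ∀ x ∈ spectrum ℝ (sigmaTr (m := m) τ), (0:ℝ) ≤ x := by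
  intro x hx
  have h := sigmaTr_posSemidef (m := m) τ hτ
  rw [h.1.spectrum_real_eq_range_eigenvalues] at hx
  obtain ⟨j, rfl⟩ := hx
  exact h.eigenvalues_nonneg j

lemma msqrt_mul_self (hτ : ∀ i, (τ i).PosDef) :
    msqrt (sigmaTr (m := m) τ) * msqrt (sigmaTr τ) = sigmaTr τ := by
  have hsa : IsSelfAdjoint (sigmaTr (m := m) τ) := sigmaTr_isHermitian τ hτ
  unfold msqrt
  rw [← cfc_mul Real.sqrt Real.sqrt (sigmaTr (m := m) τ)
    (Real.continuous_sqrt.continuousOn) (Real.continuous_sqrt.continuousOn)]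
  rw [show (fun x => Real.sqrt x * Real.sqrt x) = fun x : ℝ => Real.sqrt x * Real.sqrt x from rfl]
  rw [cfc_congr (g := fun x : ℝ => x)
    (fun x hx => Real.mul_self_sqrt (sigmaTr_spectrum_nonneg τ hτ x hx))]
  exact cfc_id' ℝ _

lemma commute_sigmaTr_bd (N : ∀ i, Matrix (m i) (m i) ℂ) :
    Commute (sigmaTr τ)
      (Matrix.blockDiagonal' fun i => N i ⊗ₖ (1 : Matrix (k i) (k i) ℂ)) := by
  unfold Commute SemiconjBy sigmaTr
  rw [← Matrix.blockDiagonal'_mul, ← Matrix.blockDiagonal'_mul]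
  refine congrArg _ (funext fun i => ?_)
  rw [smul_mul_assoc, mul_smul_comm, ← Matrix.mul_kronecker_mul, ← Matrix.mul_kronecker_mul,
    one_mul, mul_one, one_mul, mul_one]

lemma commute_msqrt_bd (hτ : ∀ i, (τ i).PosDef) (N : ∀ i, Matrix (m i) (m i) ℂ) :
    Commute (msqrt (sigmaTr τ))
      (Matrix.blockDiagonal' fun i => N i ⊗ₖ (1 : Matrix (k i) (k i) ℂ)) :=
  commute_cfc' _ (sigmaTr_isHermitian τ hτ) (commute_sigmaTr_bd τ N)

lemma key_trace (hτtr : ∀ i, Matrix.trace (τ i) = 1) (P : ∀ i, Matrix (m i) (m i) ℂ)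
    (Y : Matrix (Σ i, (m i × k i)) (Σ i, (m i × k i)) ℂ) :
    Matrix.trace ((Matrix.blockDiagonal' fun i => P i ⊗ₖ τ i) * Y) =
      Matrix.trace ((Matrix.blockDiagonal' fun i => P i ⊗ₖ τ i) * condExp τ Y) := by
  rw [trace_blockDiagonal'_mul, condExp_eq, ← Matrix.blockDiagonal'_mul,
    Matrix.trace_blockDiagonal']
  refine Finset.sum_congr rfl fun i _ => ?_
  rw [trace_kron_tau_mul, ← Matrix.mul_kronecker_mul, mul_one, Matrix.trace_kronecker,
    hτtr i, mul_one]
  rfl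

end BlocksAux

/-- **Lemma 2.2, part 2.** `E_N` is idempotent and selfadjoint for the KMS inner
product of `σ_Tr`; hence it is the orthogonal projection onto its range. -/
theorem condExp_idempotent_and_kms_selfadjoint
    {ι : Type*} [Fintype ι] [DecidableEq ι]
    {m k : ι → Type*} [∀ i, Fintype (m i)] [∀ i, Fintype (k i)]
    [∀ i, Nonempty (m i)] [∀ i, Nonempty (k i)]
    [∀ i, DecidableEq (m i)] [∀ i, DecidableEq (k i)]
    (τ : ∀ i, Matrix (k i) (k i) ℂ)
    (hτ : ∀ i, (τ i).PosDef) (hτtr : ∀ i, Matrix.trace (τ i) = 1) :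
    (∀ X : Matrix (Σ i, (m i × k i)) (Σ i, (m i × k i)) ℂ,
        condExp τ (condExp τ X) = condExp τ X) ∧
    (∀ X Y : Matrix (Σ i, (m i × k i)) (Σ i, (m i × k i)) ℂ,
        kmsInner (sigmaTr τ) (condExp τ X) Y =
          kmsInner (sigmaTr τ) (condExp τ X) (condExp τ Y) ∧
        kmsInner (sigmaTr τ) (condExp τ X) (condExp τ Y) =
          kmsInner (sigmaTr τ) X (condExp τ Y)) := by
  classical
  have idem : ∀ X : Matrix (Σ i, (m i × k i)) (Σ i, (m i × k i)) ℂ,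
      condExp τ (condExp τ X) = condExp τ X := by
    intro X
    rw [condExp_eq τ (condExp τ X), condExp_eq τ X]
    refine congrArg _ (funext fun i => ?_)
    ext a a'
    have ht : ∑ b, τ i b b = 1 := by simpa [Matrix.trace, Matrix.diag] using hτtr i
    simp only [TT, Matrix.of_apply, condExp_eq, blockOf_blockDiagonal',
      Matrix.kroneckerMap_apply, Matrix.one_apply, mul_ite, mul_one, mul_zero, ite_mul, zero_mul]
    simp only [Finset.sum_ite_eq, Finset.mem_univ, if_true]
    by_cases h : a.2 = a'.2
    · rw [if_pos h, if_pos h, ← Finset.mul_sum, ht, mul_one]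
    · rw [if_neg h, if_neg h]
  refine ⟨idem, fun X Y => ?_⟩
  have hsH : (msqrt (sigmaTr (m := m) τ))ᴴ = msqrt (sigmaTr τ) := by
    rw [← Matrix.star_eq_conjTranspose]
    have h : IsSelfAdjoint (cfc Real.sqrt (sigmaTr (m := m) τ)) := cfc_predicate _ _
    exact h
  have hss := msqrt_mul_self (m := m) τ hτ
  have hadj : ∀ Z : Matrix (Σ i, (m i × k i)) (Σ i, (m i × k i)) ℂ, (condExp τ Z)ᴴ =
      Matrix.blockDiagonal' fun i => (TT τ Z i)ᴴ ⊗ₖ (1 : Matrix (k i) (k i) ℂ) := by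
    intro Z
    rw [condExp_eq, Matrix.blockDiagonal'_conjTranspose]
    exact congrArg _ (funext fun i => by rw [kron_conjTranspose, Matrix.conjTranspose_one])
  have step : ∀ (N : ∀ i, Matrix (m i) (m i) ℂ)
      (W : Matrix (Σ i, (m i × k i)) (Σ i, (m i × k i)) ℂ),
      Matrix.trace (msqrt (sigmaTr τ) *
          Matrix.blockDiagonal' (fun i => N i ⊗ₖ (1 : Matrix (k i) (k i) ℂ)) *
          msqrt (sigmaTr τ) * W)
        = Matrix.trace ((Matrix.blockDiagonal' fun i =>
            (((Fintype.card (k i) : ℝ) / (Fintype.card (Σ i, (m i × k i)) : ℝ)) • N i) ⊗ₖ τ i)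
            * W) := by
    intro N W
    rw [(commute_msqrt_bd (m := m) τ hτ N).eq,
      mul_assoc (Matrix.blockDiagonal' fun i => N i ⊗ₖ (1 : Matrix (k i) (k i) ℂ))
        (msqrt (sigmaTr τ)) (msqrt (sigmaTr τ)), hss]
    congr 2
    unfold sigmaTr
    rw [← Matrix.blockDiagonal'_mul]
    refine congrArg _ (funext fun i => ?_)
    rw [mul_smul_comm, ← Matrix.mul_kronecker_mul, mul_one, one_mul, smul_kron]
  have kms_eq : ∀ Z W : Matrix (Σ i, (m i × k i)) (Σ i, (m i × k i)) ℂ,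
      kmsInner (sigmaTr τ) (condExp τ Z) W =
      Matrix.trace ((Matrix.blockDiagonal' fun i =>
          (((Fintype.card (k i) : ℝ) / (Fintype.card (Σ i, (m i × k i)) : ℝ)) • (TT τ Z i)ᴴ)
            ⊗ₖ τ i) * W) := by
    intro Z W
    unfold kmsInner
    rw [hadj Z, step]
  have goal1 : ∀ Z W : Matrix (Σ i, (m i × k i)) (Σ i, (m i × k i)) ℂ,
      kmsInner (sigmaTr τ) (condExp τ Z) W
        = kmsInner (sigmaTr τ) (condExp τ Z) (condExp τ W) := by
    intro Z W
    rw [kms_eq, kms_eq, key_trace τ hτtr]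
  have star_kms : ∀ A B : Matrix (Σ i, (m i × k i)) (Σ i, (m i × k i)) ℂ,
      star (kmsInner (sigmaTr τ) A B) = kmsInner (sigmaTr τ) B A := by
    intro A B
    unfold kmsInner
    rw [← Matrix.trace_conjTranspose, Matrix.conjTranspose_mul, Matrix.conjTranspose_mul,
      Matrix.conjTranspose_mul, Matrix.conjTranspose_conjTranspose, hsH]
    rw [Matrix.trace_mul_comm]
    simp only [← mul_assoc]
    rw [mul_assoc (msqrt (sigmaTr τ) * A) (msqrt (sigmaTr τ)) Bᴴ, Matrix.trace_mul_comm,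
      ← mul_assoc]
  have goal2 := congrArg star (goal1 Y X)
  rw [star_kms, star_kms] at goal2
  exact ⟨goal1 X Y, goal2.symm⟩
end

section
/- Let n be a nonempty finite type, σ : Matrix n n ℂ a positive definite matrix of trace 1, and E : Matrix n n ℂ →ₗ[ℂ] Matrix n n ℂ a linear map satisfying: (i) E ∘ E = E; (ii) ⟨E X, Y⟩_σ = ⟨X, E Y⟩_σ for all X, Y; (iii) E 1 = 1; (iv) Tr[σ * E X] = Tr[σ * X] for all X; (v) σ * E X = E X * σ for all X; (vi) E(X*) = (E X)* for all X. Define Var_σ(Y) := ‖Y − (Tr[σ * Y]) • 1‖_σ² and Var_N(X) := ‖X − E X‖_σ². Then for every Hermitian X: Var_N(X) = Var_σ(X) − Var_σ(E X), and Var_σ(E X) = Re Tr[σ * (E X) * (E X)] − (Re Tr[σ * X])². -/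
open Matrix
open scoped ComplexOrder

/-- the squared KMS norm `‖X‖_σ² = Re ⟨X, X⟩_σ` -/
noncomputable def kmsNormSq {n : Type*} [Fintype n] [DecidableEq n]
    (σ X : Matrix n n ℂ) : ℝ := (kmsInner σ X X).re

/-- the variance `Var_σ(Y) = ‖Y − Tr[σY] • 1‖_σ²` -/
noncomputable def varSigma {n : Type*} [Fintype n] [DecidableEq n]
    (σ Y : Matrix n n ℂ) : ℝ :=
  kmsNormSq σ (Y - Matrix.trace (σ * Y) • (1 : Matrix n n ℂ))

/-- the decoherence-free variance `Var_N(X) = ‖X − E X‖_σ²` -/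
noncomputable def varDF {n : Type*} [Fintype n] [DecidableEq n]
    (σ : Matrix n n ℂ) (E : Matrix n n ℂ →ₗ[ℂ] Matrix n n ℂ)
    (X : Matrix n n ℂ) : ℝ :=
  kmsNormSq σ (X - E X)

section Aux
variable {n : Type*} [Fintype n] [DecidableEq n]

lemma aux_commute_aeval {A : Type*} [Ring A] [Algebra ℝ A]
    {a b : A} (h : Commute b a) (q : Polynomial ℝ) : Commute b (Polynomial.aeval a q) := by
  induction q using Polynomial.induction_on with
  | C r => simpa using Algebra.commute_algebraMap_right r b
  | add p q hp hq => simpa [map_add] using hp.add_right hq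
  | monomial k r ih =>
      have : (Polynomial.aeval a) (Polynomial.C r * Polynomial.X ^ (k + 1))
          = (Polynomial.aeval a) (Polynomial.C r * Polynomial.X ^ k) * a := by
        simp [pow_succ, mul_assoc]
      rw [this]
      exact ih.mul_right h

lemma msqrt_commute (σ : Matrix n n ℂ) (hσ : σ.PosDef) (Y : Matrix n n ℂ)
    (h : Commute Y σ) : Commute Y (msqrt σ) := by
  have hH := hσ.1
  classical
  let t : Finset ℝ := (Matrix.finite_real_spectrum (A := σ)).toFinset
  let p : Polynomial ℝ := Lagrange.interpolate t id Real.sqrt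
  have hmem : ∀ x ∈ spectrum ℝ σ, x ∈ t := fun x hx => by simpa [t] using hx
  have hp : ∀ x ∈ spectrum ℝ σ, p.eval x = Real.sqrt x := by
    intro x hx
    have := Lagrange.eval_interpolate_at_node (v := id) (s := t) Real.sqrt
      (Set.injOn_id _) (hmem x hx)
    simpa [p] using this
  have : msqrt σ = Polynomial.aeval σ p := by
    rw [msqrt, ← cfc_polynomial p σ]
    exact cfc_congr fun x hx => (hp x hx).symm
  rw [this]
  exact aux_commute_aeval h p

lemma msqrt_mul_self_s3 (σ : Matrix n n ℂ) (hσ : σ.PosDef) : msqrt σ * msqrt σ = σ := by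
  have hH := hσ.1
  rw [msqrt, ← cfc_mul Real.sqrt Real.sqrt σ]
  rw [cfc_congr (g := id) (fun x hx => ?_), cfc_id ℝ σ]
  rw [Matrix.IsHermitian.spectrum_real_eq_range_eigenvalues hH] at hx
  obtain ⟨i, rfl⟩ := hx
  exact Real.mul_self_sqrt (hσ.eigenvalues_pos i).le

lemma kms_expand (σ A B C D : Matrix n n ℂ) :
    kmsInner σ (A - B) (C - D) =
      kmsInner σ A C - kmsInner σ A D - kmsInner σ B C + kmsInner σ B D := by
  simp only [kmsInner, conjTranspose_sub, sub_mul, mul_sub, trace_sub]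
  ring

lemma kms_smul_left (σ A B : Matrix n n ℂ) (t : ℂ) :
    kmsInner σ (t • A) B = star t * kmsInner σ A B := by
  simp [kmsInner, conjTranspose_smul, smul_mul_assoc, trace_smul]

lemma kms_smul_right (σ A B : Matrix n n ℂ) (t : ℂ) :
    kmsInner σ A (t • B) = t * kmsInner σ A B := by
  simp [kmsInner, mul_smul_comm, trace_smul]

lemma kms_one_left (σ : Matrix n n ℂ) (hσ : σ.PosDef) (B : Matrix n n ℂ) :
    kmsInner σ 1 B = Matrix.trace (σ * B) := by
  rw [kmsInner, conjTranspose_one, mul_one, msqrt_mul_self_s3 σ hσ]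

lemma kms_one_right (σ : Matrix n n ℂ) (hσ : σ.PosDef) (A : Matrix n n ℂ) :
    kmsInner σ A 1 = Matrix.trace (σ * Aᴴ) := by
  rw [kmsInner, mul_one, Matrix.trace_mul_comm, ← mul_assoc, msqrt_mul_self_s3 σ hσ]

lemma varSigma_of_herm (σ Y : Matrix n n ℂ) (hσ : σ.PosDef)
    (hσtr : Matrix.trace σ = 1) (hY : Yᴴ = Y) :
    varSigma σ Y = (kmsInner σ Y Y).re - ((Matrix.trace (σ * Y)).re) ^ 2 := by
  set u := Matrix.trace (σ * Y) with hu_def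
  have hu : star u = u := by
    rw [hu_def, ← Matrix.trace_conjTranspose, conjTranspose_mul, hY, hσ.1.eq,
      Matrix.trace_mul_comm]
  have hre : u = (u.re : ℂ) := (Complex.conj_eq_iff_re.mp hu).symm
  rw [varSigma, kmsNormSq]
  have h1Y : kmsInner σ 1 Y = u := kms_one_left σ hσ Y
  have hY1 : kmsInner σ Y 1 = u := by rw [kms_one_right σ hσ Y, hY]
  have h11 : kmsInner σ 1 1 = 1 := by
    rw [kms_one_left σ hσ 1, mul_one, hσtr]
  rw [kms_expand σ Y (u • 1) Y (u • 1), kms_smul_right σ Y 1 u, kms_smul_left σ 1 Y u,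
    kms_smul_left σ 1 (u • 1) u, kms_smul_right σ 1 1 u, hY1, h1Y, h11, hu]
  have hcol : kmsInner σ Y Y - u * u - u * u + u * (u * 1) = kmsInner σ Y Y - u * u := by ring
  rw [hcol, hre, Complex.sub_re, ← Complex.ofReal_mul, Complex.ofReal_re]
  simp [sq]

end Aux

/-- **Lemma 2.4.** The decoherence-free variance satisfies
`Var_N(X) = Var_σ(X) − Var_σ(E X)` and
`Var_σ(E X) = Re Tr[σ (E X)²] − (Re Tr[σ X])²` for Hermitian `X`. -/
theorem varDF_eq_varSigma_sub
    {n : Type*} [Fintype n] [DecidableEq n] [Nonempty n]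
    (σ : Matrix n n ℂ) (hσ : σ.PosDef) (hσtr : Matrix.trace σ = 1)
    (E : Matrix n n ℂ →ₗ[ℂ] Matrix n n ℂ)
    (hE1 : ∀ X, E (E X) = E X)
    (hE2 : ∀ X Y, kmsInner σ (E X) Y = kmsInner σ X (E Y))
    (hE3 : E 1 = 1)
    (hE4 : ∀ X, Matrix.trace (σ * E X) = Matrix.trace (σ * X))
    (hE5 : ∀ X, σ * E X = E X * σ)
    (hE6 : ∀ X, E Xᴴ = (E X)ᴴ)
    (X : Matrix n n ℂ) (hX : X.IsHermitian) :
    varDF σ E X = varSigma σ X - varSigma σ (E X) ∧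
      varSigma σ (E X) =
        (Matrix.trace (σ * E X * E X)).re - ((Matrix.trace (σ * X)).re) ^ 2 := by
  have hXE : (E X)ᴴ = E X := by
    rw [← hE6 X, hX.eq]
  have hs2 : msqrt σ * msqrt σ = σ := msqrt_mul_self_s3 σ hσ
  have hsc : E X * msqrt σ = msqrt σ * E X :=
    msqrt_commute σ hσ (E X) (hE5 X).symm
  -- the key inner products
  have hadj1 : kmsInner σ (E X) X = kmsInner σ X (E X) := hE2 X X
  have hadj2 : kmsInner σ (E X) (E X) = kmsInner σ X (E X) := by
    rw [hE2 X (E X), hE1 X]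
  -- ⟨E X, E X⟩ = Tr[σ (E X)²]
  have hEE : kmsInner σ (E X) (E X) = Matrix.trace (σ * E X * E X) := by
    rw [kmsInner, hXE, mul_assoc (msqrt σ) (E X) (msqrt σ), hsc, ← mul_assoc, hs2]
  -- the two variances
  have hVX : varSigma σ X = (kmsInner σ X X).re - ((Matrix.trace (σ * X)).re) ^ 2 :=
    varSigma_of_herm σ X hσ hσtr hX.eq
  have hVE : varSigma σ (E X) =
      (Matrix.trace (σ * E X * E X)).re - ((Matrix.trace (σ * X)).re) ^ 2 := by
    rw [varSigma_of_herm σ (E X) hσ hσtr hXE, hEE, hE4 X]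
  refine ⟨?_, hVE⟩
  have hXEX : kmsInner σ X (E X) = Matrix.trace (σ * E X * E X) :=
    hadj2.symm.trans hEE
  have hDF : varDF σ E X = (kmsInner σ X X).re - (Matrix.trace (σ * E X * E X)).re := by
    rw [varDF, kmsNormSq, kms_expand σ X (E X) X (E X), hadj1, hXEX, hEE]
    have hcol : kmsInner σ X X - Matrix.trace (σ * E X * E X)
        - Matrix.trace (σ * E X * E X) + Matrix.trace (σ * E X * E X)
        = kmsInner σ X X - Matrix.trace (σ * E X * E X) := by ring
    rw [hcol, Complex.sub_re]
  rw [hDF, hVX, hVE]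
  ring
end

section
/- Let n be a nonempty finite type, σ : Matrix n n ℂ positive definite of trace 1, L : Matrix n n ℂ →ₗ[ℂ] Matrix n n ℂ a linear map, and for t ≥ 0 let P_t := exp(t • L) be the exponential of the endomorphism t • L. Let E : Matrix n n ℂ →ₗ[ℂ] Matrix n n ℂ satisfy E ∘ E = E and ⟨E X, Y⟩_σ = ⟨X, E Y⟩_σ for all X, Y. Assume: (a) L(X*) = (L X)* for all X; (b) L ∘ E = E ∘ L; (c) for all t ≥ 0 and all X, ‖P_t(E X)‖_σ = ‖E X‖_σ; (d) (Poincaré inequality) there is λ > 0 with λ · ‖X − E X‖_σ² ≤ −Re⟨X, L X⟩_σ for every Hermitian X. Then for every Hermitian X and every t ≥ 0: ‖P_t X − E(P_t X)‖_σ² ≤ exp(−2 λ t) · ‖X − E X‖_σ². -/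
open Matrix
open scoped ComplexOrder

attribute [local instance] Matrix.frobeniusNormedAddCommGroup Matrix.frobeniusNormedSpace

/-- the KMS norm `‖X‖_σ` -/
noncomputable def kmsNorm {n : Type*} [Fintype n] [DecidableEq n]
    (σ X : Matrix n n ℂ) : ℝ := Real.sqrt (kmsNormSq σ X)

/-- helper instance (port): instance search no longer finds the topological-ring structure of
the operator algebra under the local Frobenius norm instances. -/
instance matrixCLMIsTopologicalRing {n : Type*} [Fintype n] [DecidableEq n] :
    IsTopologicalRing (Matrix n n ℂ →L[ℂ] Matrix n n ℂ) :=
  @NonUnitalSeminormedRing.toIsTopologicalRing _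
    (@SeminormedRing.toNonUnitalSeminormedRing _ (@NormedRing.toSeminormedRing _
      (ContinuousLinearMap.toNormedRing (𝕜 := ℂ) (E := Matrix n n ℂ))))

attribute [local instance] Matrix.frobeniusNormedRing Matrix.frobeniusNormedAlgebra

set_option synthInstance.maxHeartbeats 1000000
set_option maxHeartbeats 1000000

open NormedSpace

section Helpers
variable {n : Type*} [Fintype n] [DecidableEq n]

lemma msqrt_isHermitian (σ : Matrix n n ℂ) : (msqrt σ).IsHermitian :=
  cfc_predicate Real.sqrt σ

lemma msqrt_posSemidef {σ : Matrix n n ℂ} (hσ : σ.PosDef) : (msqrt σ).PosSemidef := by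
  have h1 := hσ.1
  rw [msqrt, h1.cfc_eq]
  rw [Matrix.IsHermitian.cfc]
  rw [Unitary.conjStarAlgAut_apply, Matrix.star_eq_conjTranspose]
  apply Matrix.PosSemidef.mul_mul_conjTranspose_same
  refine Matrix.posSemidef_diagonal_iff.mpr fun i => ?_
  simp only [Function.comp_apply]
  rw [RCLike.nonneg_iff]
  constructor <;> simp [Real.sqrt_nonneg]

-- conj symmetry
lemma kmsInner_star (σ X Y : Matrix n n ℂ) :
    kmsInner σ Y X = star (kmsInner σ X Y) := by
  have hS := (msqrt_isHermitian σ).eq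
  rw [kmsInner, kmsInner, ← Matrix.trace_conjTranspose]
  simp only [Matrix.conjTranspose_mul, Matrix.conjTranspose_conjTranspose, hS]
  rw [show msqrt σ * Yᴴ * msqrt σ * X = (msqrt σ * Yᴴ) * (msqrt σ * X) by
    simp only [mul_assoc]]
  rw [Matrix.trace_mul_comm (msqrt σ * Yᴴ) (msqrt σ * X), Matrix.trace_mul_comm Yᴴ]
  simp only [mul_assoc]

lemma kmsInner_re_comm (σ X Y : Matrix n n ℂ) :
    (kmsInner σ Y X).re = (kmsInner σ X Y).re := by
  rw [kmsInner_star, RCLike.star_def, Complex.conj_re]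

lemma kmsInner_sub_left (σ X₁ X₂ Y : Matrix n n ℂ) :
    kmsInner σ (X₁ - X₂) Y = kmsInner σ X₁ Y - kmsInner σ X₂ Y := by
  simp [kmsInner, Matrix.conjTranspose_sub, Matrix.sub_mul, Matrix.mul_sub]

lemma kmsInner_sub_right (σ X Y₁ Y₂ : Matrix n n ℂ) :
    kmsInner σ X (Y₁ - Y₂) = kmsInner σ X Y₁ - kmsInner σ X Y₂ := by
  simp [kmsInner, Matrix.mul_sub]

lemma kmsNormSq_nonneg {σ : Matrix n n ℂ} (hσ : σ.PosDef) (X : Matrix n n ℂ) :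
    0 ≤ kmsNormSq σ X := by
  obtain ⟨B, hB⟩ : ∃ B : Matrix n n ℂ, msqrt σ = Bᴴ * B := by
    open scoped MatrixOrder in
    exact ⟨CFC.sqrt (msqrt σ), by
      rw [(CFC.sqrt_nonneg (msqrt σ)).posSemidef.1.eq,
        CFC.sqrt_mul_sqrt_self _ (msqrt_posSemidef hσ).nonneg]⟩
  rw [kmsNormSq, kmsInner, hB]
  set M := B * X * Bᴴ with hM
  have h2 : Mᴴ * M = (B * Xᴴ * Bᴴ * B * X) * Bᴴ := by
    simp [hM, Matrix.conjTranspose_mul, mul_assoc]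
  have : (Bᴴ * B * Xᴴ * (Bᴴ * B) * X).trace = (Mᴴ * M).trace := by
    rw [h2, Matrix.trace_mul_comm (B * Xᴴ * Bᴴ * B * X) Bᴴ]
    simp only [mul_assoc]
  rw [this]
  have : (Mᴴ * M).trace = ∑ i, ∑ j, (starRingEnd ℂ) (M j i) * M j i := by
    simp [Matrix.trace, Matrix.diag, Matrix.mul_apply, Matrix.conjTranspose_apply]
  rw [this]
  simp only [Complex.re_sum]
  apply Finset.sum_nonneg; intro i _
  apply Finset.sum_nonneg; intro j _
  rw [mul_comm, Complex.mul_conj]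
  simp [Complex.normSq_nonneg]

/-- conjugate transpose as a real-linear continuous map -/
noncomputable def ctCLM : Matrix n n ℂ →L[ℝ] Matrix n n ℂ :=
  LinearMap.toContinuousLinearMap
    { toFun := fun M => Mᴴ
      map_add' := fun M N => Matrix.conjTranspose_add M N
      map_smul' := fun r M => by
        ext i j
        simp [Matrix.conjTranspose_apply, Complex.conj_ofReal] }

@[simp] lemma ctCLM_apply (M : Matrix n n ℂ) : (ctCLM (n := n)) M = Mᴴ := rfl

noncomputable def traceReCLM : Matrix n n ℂ →L[ℝ] ℝ :=
  Complex.reCLM.comp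
    ((LinearMap.toContinuousLinearMap (Matrix.traceLinearMap n ℂ ℂ)).restrictScalars ℝ)

@[simp] lemma traceReCLM_apply (M : Matrix n n ℂ) :
    (traceReCLM (n := n)) M = (Matrix.trace M).re := rfl

lemma hasDerivAt_kmsNormSq (σ : Matrix n n ℂ) {W : ℝ → Matrix n n ℂ}
    {W' : Matrix n n ℂ} {t : ℝ} (h : HasDerivAt W W' t) :
    HasDerivAt (fun s => kmsNormSq σ (W s))
      (2 * (kmsInner σ (W t) W').re) t := by
  set S := msqrt σ with hSdef
  have hC : HasDerivAt (fun s => (W s)ᴴ) W'ᴴ t := by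
    exact ((ctCLM (n := n)).hasFDerivAt.comp_hasDerivAt t h)
  have h1 : HasDerivAt (fun s => S * (W s)ᴴ * S * W s)
      ((S * W'ᴴ * S) * W t + (S * (W t)ᴴ * S) * W') t :=
    ((hC.const_mul S).mul_const S).mul h
  have h2 : HasDerivAt (fun s => kmsNormSq σ (W s))
      ((Matrix.trace ((S * W'ᴴ * S) * W t + (S * (W t)ᴴ * S) * W')).re) t := by
    exact ((traceReCLM (n := n)).hasFDerivAt.comp_hasDerivAt t h1)
  have h3 : (Matrix.trace ((S * W'ᴴ * S) * W t + (S * (W t)ᴴ * S) * W')).re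
      = 2 * (kmsInner σ (W t) W').re := by
    rw [Matrix.trace_add, Complex.add_re]
    have : (Matrix.trace (S * W'ᴴ * S * W t)).re = (kmsInner σ W' (W t)).re := rfl
    rw [this, kmsInner_re_comm]
    have : (Matrix.trace (S * (W t)ᴴ * S * W')).re = (kmsInner σ (W t) W').re := rfl
    rw [this]; ring
  exact h3 ▸ h2

noncomputable instance opNR : NormedRing (Matrix n n ℂ →L[ℂ] Matrix n n ℂ) :=
  ContinuousLinearMap.toNormedRing (𝕜 := ℂ) (E := Matrix n n ℂ)

noncomputable instance opNS : NormedSpace ℝ (Matrix n n ℂ →L[ℂ] Matrix n n ℂ) :=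
  ContinuousLinearMap.toNormedSpace (𝕜 := ℂ) (𝕜₂ := ℂ) (σ₁₂ := RingHom.id ℂ)
    (E := Matrix n n ℂ) (F := Matrix n n ℂ) (𝕜' := ℝ)

noncomputable instance opNA : NormedAlgebra ℝ (Matrix n n ℂ →L[ℂ] Matrix n n ℂ) :=
  { opNS, ContinuousLinearMap.algebra with }

noncomputable instance opCSM : ContinuousSMul ℝ (Matrix n n ℂ →L[ℂ] Matrix n n ℂ) :=
  @IsBoundedSMul.continuousSMul ℝ _ _ _ _ _ _ (@NormedSpace.toIsBoundedSMul ℝ _ _ _ opNS)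

instance opCS : @CompleteSpace (Matrix n n ℂ →L[ℂ] Matrix n n ℂ)
    (@PseudoMetricSpace.toUniformSpace _ (@SeminormedRing.toPseudoMetricSpace _
      (@NormedRing.toSeminormedRing _ opNR))) := by
  haveI : SequentialSpace (Matrix n n ℂ) := by
    have h : @SequentialSpace (Matrix n n ℂ)
        (@UniformSpace.toTopologicalSpace _ PseudoMetricSpace.toUniformSpace) := inferInstance
    exact h
  exact ContinuousLinearMap.instCompleteSpace (𝕜₁ := ℂ) (E := Matrix n n ℂ) (F := Matrix n n ℂ)
    (σ := RingHom.id ℂ)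

section Exp

variable (f : Matrix n n ℂ →L[ℂ] Matrix n n ℂ)

/-- conjugation of an operator by conjTranspose, as a continuous linear map -/
noncomputable def ctConj : Matrix n n ℂ →L[ℂ] Matrix n n ℂ :=
  LinearMap.toContinuousLinearMap
    { toFun := fun X => (f Xᴴ)ᴴ
      map_add' := fun X Y => by simp [Matrix.conjTranspose_add]
      map_smul' := fun c X => by
        simp [Matrix.conjTranspose_smul] }

@[simp] lemma ctConj_apply (X : Matrix n n ℂ) : ctConj f X = (f Xᴴ)ᴴ := rfl

lemma frob_norm_ct (X : Matrix n n ℂ) : ‖Xᴴ‖ = ‖X‖ :=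
  Matrix.frobenius_norm_conjTranspose X

/-- `ctConj` as a ring homomorphism on the operator algebra -/
noncomputable def ctConjHom :
    (Matrix n n ℂ →L[ℂ] Matrix n n ℂ) →+* (Matrix n n ℂ →L[ℂ] Matrix n n ℂ) where
  toFun := ctConj
  map_one' := by ext X; simp
  map_mul' f g := by ext X; simp
  map_zero' := by ext X; simp
  map_add' f g := by ext X; simp

lemma ctConjHom_cont : Continuous (ctConjHom (n := n)) := by
  have h : ∀ f : Matrix n n ℂ →L[ℂ] Matrix n n ℂ, ‖ctConjHom f‖ ≤ ‖f‖ := by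
    intro f
    apply ContinuousLinearMap.opNorm_le_bound _ (norm_nonneg f)
    intro X
    show ‖(f Xᴴ)ᴴ‖ ≤ ‖f‖ * ‖X‖
    rw [frob_norm_ct, ← frob_norm_ct X]
    exact f.le_opNorm Xᴴ
  let ΦL : (Matrix n n ℂ →L[ℂ] Matrix n n ℂ) →ₗ[ℝ] (Matrix n n ℂ →L[ℂ] Matrix n n ℂ) :=
    { toFun := ctConjHom
      map_add' := fun f g => map_add ctConjHom f g
      map_smul' := fun r f => by
        refine ContinuousLinearMap.ext fun X => ?_
        show ((r • f) Xᴴ)ᴴ = (r • ctConjHom f) X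
        show ((r • f) Xᴴ)ᴴ = r • (f Xᴴ)ᴴ
        simp }
  have := (ΦL.mkContinuous 1 (fun f => by rw [one_mul]; exact h f)).continuous
  exact this

end Exp

section ExpFacts

abbrev OpA (n : Type*) [Fintype n] [DecidableEq n] :=
  Matrix n n ℂ →L[ℂ] Matrix n n ℂ

lemma expC_eq_expR (f : OpA n) : NormedSpace.exp f = NormedSpace.exp f := by
  rfl

lemma hasDerivAt_expApply (T : OpA n) (X : Matrix n n ℂ) (t : ℝ) :
    HasDerivAt (fun s : ℝ => NormedSpace.exp (s • T) X)
      (NormedSpace.exp (t • T) (T X)) t := by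
  have h1 : HasDerivAt (fun u : ℝ => NormedSpace.exp (u • T))
      (NormedSpace.exp (t • T) * T) t := hasDerivAt_exp_smul_const T t
  have h2 := (((ContinuousLinearMap.apply ℂ (Matrix n n ℂ)) X).restrictScalars
      ℝ).hasFDerivAt.comp_hasDerivAt t h1
  simp only [ContinuousLinearMap.coe_restrictScalars', Function.comp_def,
    ContinuousLinearMap.apply_apply, ContinuousLinearMap.mul_apply] at h2
  have h3 : ∀ u : ℝ, NormedSpace.exp (u • T) = NormedSpace.exp (u • T) :=
    fun u => (expC_eq_expR _).symm
  exact h2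

lemma exp_comm_apply (T S : OpA n) (h : Commute S T) (t : ℝ) (X : Matrix n n ℂ) :
    S (NormedSpace.exp (t • T) X) = NormedSpace.exp (t • T) (S X) := by
  have hST : Commute S (t • T) := by
    show S * (t • T) = (t • T) * S
    refine ContinuousLinearMap.ext fun Y => ?_
    show S ((t • T) Y) = (t • T) (S Y)
    rw [ContinuousLinearMap.smul_apply, ContinuousLinearMap.smul_apply,
      ContinuousLinearMap.map_smul_of_tower]
    congr 1
    have := congrArg (fun A : OpA n => A Y) h.eq
    simpa using this
  have hc : Commute S (NormedSpace.exp (t • T)) := hST.exp_right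
  rw [expC_eq_expR]
  have := congrArg (fun (A : OpA n) => A X) hc.eq
  simpa [ContinuousLinearMap.mul_apply] using this

lemma exp_conjTranspose (T : OpA n) (hT : ∀ X : Matrix n n ℂ, T Xᴴ = (T X)ᴴ)
    (t : ℝ) (X : Matrix n n ℂ) :
    (NormedSpace.exp (t • T) X)ᴴ = NormedSpace.exp (t • T) Xᴴ := by
  have hΦtT : ctConjHom (t • T) = t • T := by
    refine ContinuousLinearMap.ext fun Y => ?_
    show ((t • T) Yᴴ)ᴴ = (t • T) Y
    rw [ContinuousLinearMap.smul_apply, ContinuousLinearMap.smul_apply, hT]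
    ext i j
    simp [Matrix.conjTranspose_apply, Complex.conj_ofReal]
  have hexp := map_exp_of_mem_ball (𝕂 := ℝ) ctConjHom ctConjHom_cont (t • T)
    ((expSeries_radius_eq_top ℝ (OpA n)).symm ▸ edist_lt_top _ _)
  rw [hΦtT] at hexp
  have := congrArg (fun (A : OpA n) => A Xᴴ) hexp
  rw [expC_eq_expR]
  refine Eq.trans ?_ this
  show (NormedSpace.exp (t • T) X)ᴴ = (NormedSpace.exp (t • T) Xᴴᴴ)ᴴ
  rw [Matrix.conjTranspose_conjTranspose]

end ExpFacts

lemma kmsNormSq_eq_of_kmsNorm_eq {σ : Matrix n n ℂ} (hσ : σ.PosDef)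
    {X Y : Matrix n n ℂ}
    (h : Real.sqrt (kmsNormSq σ X) = Real.sqrt (kmsNormSq σ Y)) :
    kmsNormSq σ X = kmsNormSq σ Y := by
  have := congrArg (fun r => r ^ 2) h
  simpa [Real.sq_sqrt (kmsNormSq_nonneg hσ X), Real.sq_sqrt (kmsNormSq_nonneg hσ Y)] using this

theorem poincare_implies_varDF_decay'
    {n : Type*} [Fintype n] [DecidableEq n] [Nonempty n]
    (σ : Matrix n n ℂ) (hσ : σ.PosDef)
    (L : Matrix n n ℂ →ₗ[ℂ] Matrix n n ℂ)
    (E : Matrix n n ℂ →ₗ[ℂ] Matrix n n ℂ)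
    (hE1 : ∀ X, E (E X) = E X)
    (hE2 : ∀ X Y, kmsInner σ (E X) Y = kmsInner σ X (E Y))
    (ha : ∀ X, L Xᴴ = (L X)ᴴ)
    (hb : L ∘ₗ E = E ∘ₗ L)
    (hc : ∀ t : ℝ, 0 ≤ t → ∀ X, Real.sqrt (kmsNormSq σ
        (NormedSpace.exp (t • (LinearMap.toContinuousLinearMap L)) (E X)))
      = Real.sqrt (kmsNormSq σ (E X)))
    (lam : ℝ) (hlam : 0 < lam)
    (hPI : ∀ X : Matrix n n ℂ, X.IsHermitian →
      lam * kmsNormSq σ (X - E X) ≤ -(kmsInner σ X (L X)).re) :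
    ∀ X : Matrix n n ℂ, X.IsHermitian → ∀ t : ℝ, 0 ≤ t →
      kmsNormSq σ (NormedSpace.exp (t • (LinearMap.toContinuousLinearMap L)) X
          - E (NormedSpace.exp (t • (LinearMap.toContinuousLinearMap L)) X)) ≤
        Real.exp (-2 * lam * t) * kmsNormSq σ (X - E X) := by
  intro X hX t ht
  set T : OpA n := LinearMap.toContinuousLinearMap L with hTdef
  have hTapp : ∀ Y, T Y = L Y := fun Y => rfl
  set Ec : OpA n := LinearMap.toContinuousLinearMap E with hEcdef
  have hEapp : ∀ Y, Ec Y = E Y := fun Y => rfl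
  have commE : Commute Ec T := by
    refine ContinuousLinearMap.ext fun Y => ?_
    show Ec (T Y) = T (Ec Y)
    rw [hTapp, hEapp, hTapp, hEapp]
    exact (LinearMap.congr_fun hb Y).symm
  -- the flow and its decomposition
  set Z : ℝ → Matrix n n ℂ := fun s => NormedSpace.exp (s • T) X with hZdef
  set W : ℝ → Matrix n n ℂ := fun s => Z s - E (Z s) with hWdef
  set f : ℝ → ℝ := fun s => kmsNormSq σ (W s) with hfdef
  -- derivative of Z
  have hZ' : ∀ s, HasDerivAt Z (NormedSpace.exp (s • T) (T X)) s :=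
    fun s => hasDerivAt_expApply T X s
  have hLZ : ∀ s, NormedSpace.exp (s • T) (T X) = L (Z s) := by
    intro s
    rw [← hTapp, ← exp_comm_apply T T (Commute.refl T) s X]
  have hEZ : ∀ s, E (Z s) = NormedSpace.exp (s • T) (E X) := by
    intro s
    rw [← hEapp, exp_comm_apply T Ec commE s X, hEapp]
  -- derivative of W
  have hW' : ∀ s, HasDerivAt W (L (Z s) - E (L (Z s))) s := by
    intro s
    have h1 := hZ' s
    have h2 : HasDerivAt (fun r => E (Z r)) (E (NormedSpace.exp (s • T) (T X))) s := by
      exact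
        ((Ec.restrictScalars ℝ).hasFDerivAt.comp_hasDerivAt s h1)
    have := h1.sub h2
    rw [hLZ s] at this
    exact this
  -- derivative of f
  have hf' : ∀ s, HasDerivAt f
      (2 * (kmsInner σ (W s) (L (Z s) - E (L (Z s)))).re) s :=
    fun s => hasDerivAt_kmsNormSq σ (hW' s)
  -- Z s is Hermitian
  have hZherm : ∀ s, (Z s).IsHermitian := by
    intro s
    show (Z s)ᴴ = Z s
    rw [hZdef]
    simp only
    rw [exp_conjTranspose T (fun Y => by rw [hTapp, hTapp]; exact ha Y) s X, hX.eq]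
  -- the derivative of the norm along the decoherence-free part vanishes for s > 0
  have hvanish : ∀ s : ℝ, 0 < s → (kmsInner σ (E (Z s)) (L (E (Z s)))).re = 0 := by
    intro s hs
    set u : ℝ → Matrix n n ℂ := fun r => NormedSpace.exp (r • T) (E X) with hudef
    have hu' : HasDerivAt u (NormedSpace.exp (s • T) (T (E X))) s :=
      hasDerivAt_expApply T (E X) s
    have hg : HasDerivAt (fun r => kmsNormSq σ (u r))
        (2 * (kmsInner σ (u s) (NormedSpace.exp (s • T) (T (E X)))).re) s :=
      hasDerivAt_kmsNormSq σ hu'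
    have hconst : ∀ r : ℝ, 0 < r → kmsNormSq σ (u r) = kmsNormSq σ (E X) := by
      intro r hr
      exact kmsNormSq_eq_of_kmsNorm_eq hσ (hc r hr.le X)
    have hg0 : HasDerivAt (fun r => kmsNormSq σ (u r)) 0 s := by
      refine (hasDerivAt_const s (kmsNormSq σ (E X))).congr_of_eventuallyEq ?_
      filter_upwards [Ioi_mem_nhds hs] with r hr using hconst r hr
    have huniq := hg.unique hg0
    have hTu : NormedSpace.exp (s • T) (T (E X)) = L (u s) := by
      rw [← hTapp, ← exp_comm_apply T T (Commute.refl T) s (E X)]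
    rw [hTu] at huniq
    have hus : u s = E (Z s) := (hEZ s).symm
    rw [hus] at huniq
    linarith
  -- the key differential inequality for s > 0
  have hkey : ∀ s : ℝ, 0 < s →
      2 * (kmsInner σ (W s) (L (Z s) - E (L (Z s)))).re ≤ -(2 * lam) * f s := by
    intro s hs
    have hexpand : kmsInner σ (W s) (L (Z s) - E (L (Z s)))
        = kmsInner σ (Z s) (L (Z s)) - kmsInner σ (E (Z s)) (L (E (Z s))) := by
      rw [hWdef]
      simp only
      rw [kmsInner_sub_left, kmsInner_sub_right, kmsInner_sub_right]
      have e1 : kmsInner σ (E (Z s)) (L (Z s)) = kmsInner σ (Z s) (E (L (Z s))) :=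
        hE2 _ _
      have e2 : kmsInner σ (E (Z s)) (E (L (Z s))) = kmsInner σ (Z s) (E (L (Z s))) := by
        rw [hE2, hE1]
      have e3 : kmsInner σ (Z s) (E (L (Z s)))
          = kmsInner σ (E (Z s)) (L (E (Z s))) := by
        conv_lhs => rw [← hE1 (L (Z s))]
        rw [← hE2]
        congr 1
        exact (LinearMap.congr_fun hb (Z s)).symm
      rw [e1, e2, e3]
      ring
    rw [hexpand]
    rw [Complex.sub_re, hvanish s hs, sub_zero]
    have := hPI (Z s) (hZherm s)
    have hfs : f s = kmsNormSq σ (Z s - E (Z s)) := rfl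
    rw [hfs]
    linarith
  -- Gronwall comparison
  set h : ℝ → ℝ := fun s => Real.exp (2 * lam * s) * f s with hhdef
  have hh' : ∀ s, HasDerivAt h
      (2 * lam * Real.exp (2 * lam * s) * f s
        + Real.exp (2 * lam * s) * (2 * (kmsInner σ (W s) (L (Z s) - E (L (Z s)))).re)) s := by
    intro s
    have h1 : HasDerivAt (fun r => Real.exp (2 * lam * r)) (Real.exp (2 * lam * s) * (2 * lam)) s := by
      have h0 := ((hasDerivAt_id s).const_mul (2 * lam)).exp
      simp only [id_eq, mul_one] at h0
      exact h0
    have h2 := h1.mul (hf' s)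
    exact h2.congr_deriv (by ring)
  have hanti : AntitoneOn h (Set.Icc 0 t) := by
    apply antitoneOn_of_deriv_nonpos (convex_Icc 0 t)
    · exact fun s _ => ((hh' s).continuousAt).continuousWithinAt
    · intro s hs
      exact (hh' s).differentiableAt.differentiableWithinAt
    · intro s hs
      rw [interior_Icc] at hs
      rw [(hh' s).deriv]
      have := hkey s hs.1
      have hpos := Real.exp_pos (2 * lam * s)
      nlinarith [hpos]
  have hht : h t ≤ h 0 := by
    exact hanti (Set.left_mem_Icc.mpr ht) (Set.right_mem_Icc.mpr ht) ht
  have hf0 : f 0 = kmsNormSq σ (X - E X) := by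
    have : (NormedSpace.exp ((0:ℝ) • T)) X = X := by
      have h00 : ((0:ℝ) • T) = 0 := zero_smul ℝ T
      rw [h00, NormedSpace.exp_zero, ContinuousLinearMap.one_apply]
    show kmsNormSq σ ((NormedSpace.exp ((0:ℝ) • T)) X - E ((NormedSpace.exp ((0:ℝ) • T)) X))
      = kmsNormSq σ (X - E X)
    rw [this]
  have hh0 : h 0 = kmsNormSq σ (X - E X) := by
    rw [hhdef]; simp [hf0]
  have hhteq : h t = Real.exp (2 * lam * t) * f t := rfl
  rw [hhteq, hh0] at hht
  show f t ≤ Real.exp (-2 * lam * t) * kmsNormSq σ (X - E X)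
  calc f t = Real.exp (-2 * lam * t) * (Real.exp (2 * lam * t) * f t) := by
        rw [← mul_assoc, ← Real.exp_add, show -2 * lam * t + 2 * lam * t = 0 by ring,
          Real.exp_zero, one_mul]
    _ ≤ Real.exp (-2 * lam * t) * kmsNormSq σ (X - E X) :=
        mul_le_mul_of_nonneg_left hht (Real.exp_nonneg _)

end Helpers

/-- **Theorem 2.6, first part.** The decoherence-free Poincaré inequality `PI_N(λ)`
implies exponential decay of the decoherence-free variance with rate `2λ`. -/
theorem poincare_implies_varDF_decay
    {n : Type*} [Fintype n] [DecidableEq n] [Nonempty n]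
    (σ : Matrix n n ℂ) (hσ : σ.PosDef) (hσtr : Matrix.trace σ = 1)
    (L : Matrix n n ℂ →ₗ[ℂ] Matrix n n ℂ)
    (P : ℝ → Matrix n n ℂ →L[ℂ] Matrix n n ℂ)
    (hP : ∀ t : ℝ, P t = NormedSpace.exp (t • (LinearMap.toContinuousLinearMap L)))
    (E : Matrix n n ℂ →ₗ[ℂ] Matrix n n ℂ)
    (hE1 : ∀ X, E (E X) = E X)
    (hE2 : ∀ X Y, kmsInner σ (E X) Y = kmsInner σ X (E Y))
    (ha : ∀ X, L Xᴴ = (L X)ᴴ)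
    (hb : L ∘ₗ E = E ∘ₗ L)
    (hc : ∀ t : ℝ, 0 ≤ t → ∀ X, kmsNorm σ (P t (E X)) = kmsNorm σ (E X))
    (lam : ℝ) (hlam : 0 < lam)
    (hPI : ∀ X : Matrix n n ℂ, X.IsHermitian →
      lam * kmsNormSq σ (X - E X) ≤ -(kmsInner σ X (L X)).re) :
    ∀ X : Matrix n n ℂ, X.IsHermitian → ∀ t : ℝ, 0 ≤ t →
      kmsNormSq σ (P t X - E (P t X)) ≤
        Real.exp (-2 * lam * t) * kmsNormSq σ (X - E X) := by
  intro X hX t ht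
  have hc' : ∀ s : ℝ, 0 ≤ s → ∀ Y : Matrix n n ℂ,
      Real.sqrt (kmsNormSq σ
        (NormedSpace.exp (s • (LinearMap.toContinuousLinearMap L)) (E Y)))
      = Real.sqrt (kmsNormSq σ (E Y)) := by
    intro s hs Y
    have h := hc s hs Y
    rw [hP s] at h
    exact h
  have h := poincare_implies_varDF_decay' σ hσ L E hE1 hE2 ha hb hc' lam hlam hPI X hX t ht
  rw [hP t]
  exact h
end
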